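/- Let Γ be a finite group, k a commutative ring, and A a k-linear representation of Γ such that scalar multiplication by the order |Γ| on the underlying k-module of A is bijective (for instance, if |Γ| is invertible in k). Then the group cohomology Hⁱ(Γ; A) vanishes for all i > 0. -/

import Mathlib

open CategoryTheory CategoryTheory.Limits Finset

namespace Stmt10Aux

variable {Γ : Type} [Group Γ] [Fintype Γ]

lemma snoc_succ {α : Type*} {n : ℕ} (g : Fin (n+1) → α) (y : α) :
    (fun i : Fin (n+1) => (Fin.snoc g y : Fin (n+2) → α) i.succ)
      = Fin.snoc (fun i : Fin n => g i.succ) y := by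
  funext i
  refine Fin.lastCases ?_ (fun j => ?_) i
  · rw [Fin.succ_last, Fin.snoc_last, Fin.snoc_last]
  · rw [Fin.succ_castSucc, Fin.snoc_castSucc, Fin.snoc_castSucc]

lemma snoc_zero' {α : Type*} {n : ℕ} (g : Fin (n+1) → α) (y : α) :
    (Fin.snoc g y : Fin (n+2) → α) 0 = g 0 := by
  have : (0 : Fin (n+2)) = Fin.castSucc 0 := rfl
  rw [this, Fin.snoc_castSucc]

lemma contract_last {α : Type*} {n : ℕ} (op : α → α → α) (g : Fin (n+1) → α) (y : α) :
    Fin.contractNth (Fin.last (n+1)) op (Fin.snoc g y) = g := by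
  funext i
  rw [Fin.contractNth_apply_of_lt _ _ _ _ (by simpa using i.isLt), Fin.snoc_castSucc]


lemma contract_castSucc_of_lt {α : Type*} {n : ℕ} (op : α → α → α) (g : Fin (n+1) → α) (y : α)
    (j : Fin (n+1)) (hj : (j : ℕ) < n) :
    Fin.contractNth j.castSucc op (Fin.snoc g y) = Fin.snoc (Fin.contractNth j op g) y := by
  funext i
  refine Fin.lastCases ?_ (fun i' => ?_) i
  · rw [Fin.snoc_last,
      Fin.contractNth_apply_of_gt _ _ _ _ (by simpa using hj), Fin.succ_last, Fin.snoc_last]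
  · rw [Fin.snoc_castSucc]
    rcases lt_trichotomy (i' : ℕ) (j : ℕ) with h | h | h
    · rw [Fin.contractNth_apply_of_lt _ _ _ _ (by simpa using h),
        Fin.contractNth_apply_of_lt _ _ _ _ h, Fin.snoc_castSucc]
    · rw [Fin.contractNth_apply_of_eq _ _ _ _ (by simpa using h),
        Fin.contractNth_apply_of_eq _ _ _ _ h, Fin.snoc_castSucc, Fin.succ_castSucc,
        Fin.snoc_castSucc]
    · rw [Fin.contractNth_apply_of_gt _ _ _ _ (by simpa using h),
        Fin.contractNth_apply_of_gt _ _ _ _ h, Fin.succ_castSucc, Fin.snoc_castSucc]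

lemma contract_castSucc_last {n : ℕ} (g : Fin (n+1) → Γ) (y : Γ) :
    Fin.contractNth (Fin.last n).castSucc (· * ·) (Fin.snoc g y)
      = Fin.snoc (fun i : Fin n => g i.castSucc) (g (Fin.last n) * y) := by
  funext i
  refine Fin.lastCases ?_ (fun i' => ?_) i
  · rw [Fin.snoc_last, Fin.contractNth_apply_of_eq _ _ _ _ (by simp),
      Fin.snoc_castSucc, Fin.succ_last, Fin.snoc_last]
  · rw [Fin.snoc_castSucc, Fin.contractNth_apply_of_lt _ _ _ _ (by simpa using i'.isLt),
      Fin.snoc_castSucc]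

lemma contract_last_eq {n : ℕ} (op : Γ → Γ → Γ) (g : Fin (n+1) → Γ) :
    Fin.contractNth (Fin.last n) op g = fun i : Fin n => g i.castSucc := by
  funext i
  rw [Fin.contractNth_apply_of_lt _ _ _ _ (by simpa using i.isLt)]


lemma sum_contract {M : Type*} [AddCommMonoid M] {n : ℕ} (x : (Fin (n+1) → Γ) → M)
    (g : Fin (n+1) → Γ) (j : Fin (n+1)) :
    ∑ y : Γ, x (Fin.contractNth j.castSucc (· * ·) (Fin.snoc g y))
      = ∑ y : Γ, x (Fin.snoc (Fin.contractNth j (· * ·) g) y) := by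
  rcases lt_or_ge (j : ℕ) n with hj | hj
  · exact Finset.sum_congr rfl fun y _ => by rw [contract_castSucc_of_lt _ _ _ _ hj]
  · have hjl : j = Fin.last n := Fin.ext (le_antisymm (Nat.lt_succ_iff.mp j.isLt) hj)
    subst hjl
    rw [contract_last_eq]
    calc ∑ y : Γ, x (Fin.contractNth (Fin.last n).castSucc (· * ·) (Fin.snoc g y))
        = ∑ y : Γ, x (Fin.snoc (fun i : Fin n => g i.castSucc) (g (Fin.last n) * y)) :=
          Finset.sum_congr rfl fun y _ => by rw [contract_castSucc_last]
      _ = ∑ y : Γ, x (Fin.snoc (fun i : Fin n => g i.castSucc) y) :=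
          Fintype.sum_equiv (Equiv.mulLeft (g (Fin.last n)))
            (fun y => x (Fin.snoc (fun i : Fin n => g i.castSucc) (g (Fin.last n) * y)))
            (fun y => x (Fin.snoc (fun i : Fin n => g i.castSucc) y)) (fun y => rfl)



noncomputable def sigmaMap {k : Type} [CommRing k] (A : Rep k Γ) (n : ℕ) :
    ((Fin (n+1) → Γ) → A) →ₗ[k] ((Fin n → Γ) → A) where
  toFun f g := ((-1 : k) ^ (n+1)) • ∑ y : Γ, f (Fin.snoc g y)
  map_add' f₁ f₂ := by
    funext g
    simp [Finset.sum_add_distrib, smul_add]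
  map_smul' r f := by
    funext g
    simp [Finset.smul_sum, smul_comm r]

@[simp] lemma sigmaMap_apply {k : Type} [CommRing k] (A : Rep k Γ) (n : ℕ)
    (f : (Fin (n+1) → Γ) → A) (g : Fin n → Γ) :
    sigmaMap A n f g = ((-1 : k) ^ (n+1)) • ∑ y : Γ, f (Fin.snoc g y) := rfl

lemma key {k : Type} [CommRing k] (A : Rep k Γ) (n : ℕ) (x : (Fin (n+1) → Γ) → A)
    (g : Fin (n+1) → Γ) :
    sigmaMap A (n+1) ((inhomogeneousCochains.d A (n+1)).hom x) g
      + (inhomogeneousCochains.d A n).hom (sigmaMap A n x) g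
      = (Fintype.card Γ : ℕ) • x g := by
  simp only [sigmaMap_apply, inhomogeneousCochains.d_hom_apply, snoc_zero', snoc_succ]
  have e1 : ∑ y : Γ, ∑ j : Fin (n+2), (-1:k)^((j:ℕ)+1) •
        x (Fin.contractNth j (· * ·) (Fin.snoc g y))
      = (∑ j : Fin (n+1), (-1:k)^((j:ℕ)+1) •
          ∑ y : Γ, x (Fin.snoc (Fin.contractNth j (· * ·) g) y))
        + (-1:k)^(n+2) • ∑ _y : Γ, x g := by
    rw [Finset.sum_comm, Fin.sum_univ_castSucc]
    congr 1
    · refine Finset.sum_congr rfl fun j _ => ?_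
      rw [Fin.coe_castSucc, ← Finset.smul_sum, sum_contract]
    · rw [← Finset.smul_sum, Fin.val_last]
      exact congrArg _ (Finset.sum_congr rfl fun y _ => by rw [contract_last])
  have e2 : ∀ j : Fin (n+1), ((-1:k)^((j:ℕ)+1)) • ((-1:k)^(n+1)) •
        (∑ y : Γ, x (Fin.snoc (Fin.contractNth j (· * ·) g) y))
      = ((-1:k)^(n+1)) • ((-1:k)^((j:ℕ)+1)) •
        (∑ y : Γ, x (Fin.snoc (Fin.contractNth j (· * ·) g) y)) := fun j => smul_comm _ _ _
  rw [Finset.sum_add_distrib, e1]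
  simp only [e2]
  rw [← Finset.smul_sum, map_smul, map_sum]
  have hr : ((-1:k)^(n+1+1)) • ((-1:k)^(n+2)) • (∑ _y : Γ, x g)
      = (Fintype.card Γ : ℕ) • x g := by
    rw [smul_smul, ← pow_add, Even.neg_one_pow ⟨n+2, by ring⟩, one_smul,
      Finset.sum_const, Finset.card_univ]
  rw [smul_add, smul_add, hr, show ((-1:k))^(n+1+1) = -((-1:k)^(n+1)) from by
    rw [pow_succ]; ring]
  simp only [neg_smul]
  abel



open groupCohomology HomologicalComplex in
noncomputable def hty {k : Type} [CommRing k] (A : Rep k Γ) :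
    ∀ i j, (ComplexShape.up ℕ).Rel j i →
      ((inhomogeneousCochains A).X i ⟶ (inhomogeneousCochains A).X j) := by
  intro i j hij
  have hij' : j + 1 = i := hij
  subst hij'
  exact ModuleCat.ofHom (sigmaMap A j)

set_option maxHeartbeats 1000000 in
open groupCohomology HomologicalComplex in
lemma null_f {k : Type} [CommRing k] (A : Rep k Γ) (n : ℕ) :
    (Homotopy.nullHomotopicMap' (hty A)).f (n+1)
      = (Fintype.card Γ : ℕ) • 𝟙 ((inhomogeneousCochains A).X (n+1)) := by
  rw [Homotopy.nullHomotopicMap'_f (show (ComplexShape.up ℕ).Rel n (n+1) from rfl)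
    (show (ComplexShape.up ℕ).Rel (n+1) (n+2) from rfl)]
  have h1 : hty A (n+2) (n+1) rfl = ModuleCat.ofHom (sigmaMap A (n+1)) := rfl
  have h2 : hty A (n+1) n rfl = ModuleCat.ofHom (sigmaMap A n) := rfl
  rw [h1, h2, groupCohomology.inhomogeneousCochains.d_def,
    groupCohomology.inhomogeneousCochains.d_def]
  apply ModuleCat.hom_ext
  apply LinearMap.ext
  intro x
  funext g
  show sigmaMap A (n+1) ((inhomogeneousCochains.d A (n+1)).hom x) g
      + (inhomogeneousCochains.d A n).hom (sigmaMap A n x) g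
      = ((Fintype.card Γ : ℕ) • x) g
  rw [Pi.smul_apply]
  exact key A n x g

end Stmt10Aux

open CategoryTheory Stmt10Aux HomologicalComplex groupCohomology


/-- If `Γ` is a finite group and `A` is a `k`-linear representation of `Γ` such that
scalar multiplication by the order `|Γ|` is bijective on the underlying module of `A`,
then the group cohomology `Hⁱ(Γ; A)` vanishes for all `i > 0`. -/
theorem stmt10 (k : Type) [CommRing k] (Γ : Type) [Group Γ] [Fintype Γ]
    (A : Rep k Γ)
    (h : Function.Bijective (fun a : A.V => (Fintype.card Γ : ℕ) • a))
    (i : ℕ) (hi : 0 < i) :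
    Limits.IsZero (groupCohomology A i) := by
  let C := inhomogeneousCochains A
  let φ : C ⟶ C := (Fintype.card Γ : ℕ) • 𝟙 C
  have hφf : ∀ n, φ.f n = (Fintype.card Γ : ℕ) • 𝟙 (C.X n) := fun n => rfl
  haveI : ∀ n, IsIso (φ.f n) := by
    intro n
    have hbij : Function.Bijective
        (fun v : (Fin n → Γ) → A.V => (Fintype.card Γ : ℕ) • v) := by
      constructor
      · intro a b hab
        funext t
        exact h.1 (congrFun hab t)
      · intro b
        exact ⟨fun t => (h.2 (b t)).choose, funext fun t => (h.2 (b t)).choose_spec⟩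
    exact (ConcreteCategory.isIso_iff_bijective _).mpr hbij
  haveI : IsIso φ := HomologicalComplex.Hom.isIso_of_components φ
  haveI : IsIso (homologyMap φ i) := by
    change IsIso ((homologyFunctor _ _ i).map φ)
    infer_instance
  let ν : C ⟶ C := Homotopy.nullHomotopicMap' (hty A)
  let ψ : C ⟶ C := φ - ν
  have hhom : Homotopy φ ψ :=
    Homotopy.trans
      (Homotopy.ofEq (show φ = ψ + Homotopy.nullHomotopicMap' (hty A) from
        (sub_add_cancel φ _).symm))
      (Homotopy.trans (Homotopy.add (Homotopy.refl ψ) (Homotopy.nullHomotopy' (hty A)))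
        (Homotopy.ofEq (add_zero ψ)))
  have h0 : homologyMap φ i = homologyMap ψ i := hhom.homologyMap_eq i
  have hψf : ψ.f i = 0 := by
    obtain ⟨n, rfl⟩ := Nat.exists_eq_succ_of_ne_zero (Nat.pos_iff_ne_zero.mp hi)
    show φ.f (n+1) - ν.f (n+1) = 0
    rw [hφf, null_f A n, sub_self]
  have hz : homologyMap ψ i = 0 := by
    rw [← cancel_epi (C.homologyπ i), homologyπ_naturality]
    have hc : cyclesMap ψ i = 0 := by
      rw [← cancel_mono (C.iCycles i), cyclesMap_i, hψf, Limits.comp_zero, Limits.zero_comp]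
    rw [hc, Limits.zero_comp, Limits.comp_zero]
  show Limits.IsZero (C.homology i)
  rw [Limits.IsZero.iff_id_eq_zero]
  calc 𝟙 (C.homology i) = inv (homologyMap φ i) ≫ homologyMap φ i := (IsIso.inv_hom_id _).symm
    _ = inv (homologyMap φ i) ≫ 0 :=
        congrArg (fun t => inv (homologyMap φ i) ≫ t) (h0.trans hz)
    _ = 0 := Limits.comp_zero
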